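/- arXiv:2412.19295 — 2 statements merged into one kernel-verified Lean document; each statement's English description precedes it below -/
import Mathlib

section
/- Let ω be the standard involution of the ring of symmetric functions (ω(e_i) = h_i, ω(p_i) = (-1)^{i-1} p_i), extended to symmetric power series over a torsion-free pre-λ ring R. If f is an even symmetric power series with zero constant term (a formal sum of monomials of even degree), then Exp_σ(ω(f)) = ω(Exp_σ(f)). -/
open Classical in
/-- A pre-λ ring: a commutative ring equipped with σ-operations satisfying
`σ₀ = 1`, `σ₁ = id`, and the binomial addition rule. -/
structure PreLambdaRing (R : Type*) [CommRing R] where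
  sigma : ℕ → R → R
  sigma_zero : ∀ r, sigma 0 r = 1
  sigma_one : ∀ r, sigma 1 r = r
  sigma_add : ∀ (k : ℕ) (r s : R),
    sigma k (r + s) = ∑ p ∈ Finset.HasAntidiagonal.antidiagonal k, sigma p.1 r * sigma p.2 s

variable {R : Type*} [CommRing R]

/-- The λ-operations (`eₖ ∘ ·`) derived from the σ-operations via the
identity `∑_{i+j=k} (-1)^i eᵢ h_j = 0` for `k ≥ 1`. -/
noncomputable def lamR (L : PreLambdaRing R) : ℕ → R → R
  | 0, _ => 1
  | k + 1, r =>
      (-1 : R) ^ k *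
        ∑ i ∈ (Finset.range (k + 1)).attach,
          (-1 : R) ^ (i : ℕ) * lamR L i r * L.sigma (k + 1 - (i : ℕ)) r
  termination_by k => k
  decreasing_by exact Finset.mem_range.mp i.2

/-- The Adams operations (`pₖ ∘ ·`) derived from the σ-operations via the
Newton identity `k hₖ = ∑_{i=1}^{k} pᵢ h_{k-i}`. -/
noncomputable def adamsR (L : PreLambdaRing R) : ℕ → R → R
  | 0, _ => 1
  | k + 1, r =>
      (k + 1 : ℕ) • L.sigma (k + 1) r -
        ∑ i ∈ (Finset.range k).attach,
          adamsR L ((i : ℕ) + 1) r * L.sigma (k - (i : ℕ)) r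
  termination_by k => k
  decreasing_by exact Nat.succ_lt_succ (Finset.mem_range.mp i.2)


/-- Constructor for multivariate power series from a coefficient function. -/
def MvPS.mk {σ R : Type*} (f : (σ →₀ ℕ) → R) : MvPowerSeries σ R := f

/-- `z_τ = ∏ᵢ τ(i)!·i^{τ(i)}` for a partition `τ`. -/
def zPart (μ : Multiset ℕ) : ℕ :=
  ∏ i ∈ μ.toFinset, (μ.count i).factorial * i ^ (μ.count i)

section

variable [Algebra ℚ R] (L : PreLambdaRing R)

/-  `Λ_R^∧` is modeled in power sum coordinates: `MvPowerSeries ℕ R` where the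
variable of index `j ≥ 1` stands for `p_j` (index `0` is unused), so the
weight of a monomial `m` is `∑_j j·(m j)` and its number of parts is
`∑_j m j`. -/

/-- The weight (degree in `Λ`) of a `p`-monomial. -/
def wtP (m : ℕ →₀ ℕ) : ℕ := m.sum fun j c => j * c

/-- The number of parts of a `p`-monomial. -/
def szP (m : ℕ →₀ ℕ) : ℕ := m.sum fun _ c => c

/-- A symmetric power series is even if it is a formal sum of monomials of
even degree. -/
def EvenPS (f : MvPowerSeries ℕ R) : Prop :=
  ∀ m : ℕ →₀ ℕ, MvPowerSeries.coeff m f ≠ 0 → Even (wtP m)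

/-- The standard involution `ω` of `Λ_R^∧` in `p`-coordinates:
`ω(a·p_λ) = (-1)^{|λ| - ‖λ‖}·a·p_λ`. -/
noncomputable def omegaPS (f : MvPowerSeries ℕ R) : MvPowerSeries ℕ R :=
  MvPS.mk fun m => (-1 : R) ^ (wtP m + szP m) * MvPowerSeries.coeff m f

open Classical in
/-- Plethysm by the power sum `p_j` on `Λ_R^∧` in `p`-coordinates:
`p_j ∘ (a·p_λ) = (p_j ∘ a)·p_{jλ}`, using the Adams operations of the
torsion-free pre-λ ring `R` on coefficients. -/
noncomputable def pAdamsPS (j : ℕ) (f : MvPowerSeries ℕ R) :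
    MvPowerSeries ℕ R :=
  MvPS.mk fun m =>
    if h : ∃ m' : ℕ →₀ ℕ, Finsupp.mapDomain (fun i => j * i) m' = m then
      adamsR L j (MvPowerSeries.coeff (Classical.choose h) f)
    else 0

/-- The plethysm `h_k ∘ ·` on `Λ_R^∧` in `p`-coordinates, via
`h_k = ∑_{λ ⊢ k} p_λ / z_λ`. -/
noncomputable def hPlethP (k : ℕ) (f : MvPowerSeries ℕ R) :
    MvPowerSeries ℕ R :=
  MvPS.mk fun m =>
    ∑ lam : Nat.Partition k,
      ((zPart lam.parts : ℚ)⁻¹) •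
        MvPowerSeries.coeff m ((lam.parts.map fun j => pAdamsPS L j f).prod)

/-- The plethystic exponential `Exp_σ(f) = ∑_{k≥0} h_k ∘ f` in
`p`-coordinates. -/
noncomputable def ExpP (f : MvPowerSeries ℕ R) : MvPowerSeries ℕ R :=
  MvPS.mk fun m => ∑ᶠ k : ℕ, MvPowerSeries.coeff m (hPlethP L k f)

/-! ### Auxiliary lemmas -/

lemma adamsR_succ_def (k : ℕ) (r : R) :
    adamsR L (k + 1) r = (k + 1 : ℕ) • L.sigma (k + 1) r -
      ∑ i ∈ Finset.range k, adamsR L (i + 1) r * L.sigma (k - i) r := by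
  rw [adamsR]
  congr 1
  exact Finset.sum_attach (Finset.range k) (fun i => adamsR L (i + 1) r * L.sigma (k - i) r)

/-- Newton's identity packaged from the definition of `adamsR`. -/
lemma adamsR_newton (k : ℕ) (r : R) :
    (k + 1 : ℕ) • L.sigma (k + 1) r =
      ∑ i ∈ Finset.range (k + 1), adamsR L (i + 1) r * L.sigma (k - i) r := by
  rw [Finset.sum_range_succ, Nat.sub_self, L.sigma_zero, mul_one, adamsR_succ_def]
  abel

/-- Generating series of the σ-operations. -/
noncomputable def Hser (r : R) : PowerSeries R := PowerSeries.mk fun n => L.sigma n r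

/-- Generating series of the Adams operations (shifted by one). -/
noncomputable def Pser (r : R) : PowerSeries R := PowerSeries.mk fun n => adamsR L (n + 1) r

lemma Hser_mul (x y : R) : Hser L (x + y) = Hser L x * Hser L y := by
  ext n
  rw [PowerSeries.coeff_mul]
  simp only [Hser, PowerSeries.coeff_mk]
  exact L.sigma_add n x y

lemma Hser_deriv (r : R) :
    PowerSeries.derivativeFun (Hser L r) = Pser L r * Hser L r := by
  ext n
  rw [show PowerSeries.derivativeFun (Hser L r) = PowerSeries.derivative R (Hser L r) from rfl,
    PowerSeries.coeff_derivative, PowerSeries.coeff_mul,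
    Finset.Nat.sum_antidiagonal_eq_sum_range_succ_mk]
  simp only [Hser, Pser, PowerSeries.coeff_mk]
  rw [mul_comm, show ((n : R) + 1) = ((n + 1 : ℕ) : R) by push_cast; ring, ← nsmul_eq_mul]
  exact adamsR_newton L n r

/-- Additivity of the Adams operations of a pre-λ ring. -/
lemma adamsR_add (k : ℕ) (x y : R) :
    adamsR L (k + 1) (x + y) = adamsR L (k + 1) x + adamsR L (k + 1) y := by
  have hu : IsUnit (Hser L (x + y)) := by
    rw [PowerSeries.isUnit_iff_constantCoeff]
    have h1 : PowerSeries.constantCoeff (Hser L (x + y)) = 1 := by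
      simp [Hser, PowerSeries.constantCoeff_mk, L.sigma_zero]
    rw [h1]; exact isUnit_one
  have hP : Pser L (x + y) = Pser L x + Pser L y := by
    refine hu.mul_right_cancel ?_
    calc Pser L (x + y) * Hser L (x + y)
        = PowerSeries.derivativeFun (Hser L (x + y)) := (Hser_deriv L _).symm
      _ = PowerSeries.derivativeFun (Hser L x * Hser L y) := by rw [Hser_mul]
      _ = Hser L x • PowerSeries.derivativeFun (Hser L y) +
            Hser L y • PowerSeries.derivativeFun (Hser L x) :=
          PowerSeries.derivativeFun_mul _ _
      _ = Hser L x * (Pser L y * Hser L y) + Hser L y * (Pser L x * Hser L x) := by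
          rw [smul_eq_mul, smul_eq_mul, Hser_deriv, Hser_deriv]
      _ = (Pser L x + Pser L y) * Hser L (x + y) := by rw [Hser_mul]; ring
  have := congrArg (PowerSeries.coeff k) hP
  simpa [Pser, PowerSeries.coeff_mk] using this

lemma adamsR_zero_right (k : ℕ) : adamsR L (k + 1) (0 : R) = 0 := by
  have h := adamsR_add L k (0 : R) 0
  rw [add_zero] at h
  exact left_eq_add.mp h

lemma adamsR_neg (k : ℕ) (r : R) : adamsR L (k + 1) (-r) = -adamsR L (k + 1) r := by
  have h := adamsR_add L k r (-r)
  rw [add_neg_cancel, adamsR_zero_right] at h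
  exact eq_neg_of_add_eq_zero_right h.symm

lemma adamsR_sign (j : ℕ) (hj : j ≠ 0) (s : ℕ) (r : R) :
    adamsR L j ((-1) ^ s * r) = (-1) ^ s * adamsR L j r := by
  obtain ⟨k, rfl⟩ := Nat.exists_eq_succ_of_ne_zero hj
  rcases Nat.even_or_odd s with h | h
  · rw [h.neg_one_pow, one_mul, one_mul]
  · rw [h.neg_one_pow, neg_one_mul, neg_one_mul, adamsR_neg]

lemma wtP_add (a b : ℕ →₀ ℕ) : wtP (a + b) = wtP a + wtP b :=
  Finsupp.sum_add_index' (fun i => mul_zero i) (fun i b1 b2 => mul_add i b1 b2)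

lemma szP_add (a b : ℕ →₀ ℕ) : szP (a + b) = szP a + szP b :=
  Finsupp.sum_add_index' (fun _ => rfl) (fun _ _ _ => rfl)

lemma wtP_zero : wtP (0 : ℕ →₀ ℕ) = 0 := Finsupp.sum_zero_index

lemma szP_zero : szP (0 : ℕ →₀ ℕ) = 0 := Finsupp.sum_zero_index

lemma wtP_mapDomain (j : ℕ) (m : ℕ →₀ ℕ) :
    wtP (Finsupp.mapDomain (fun i => j * i) m) = j * wtP m := by
  unfold wtP
  rw [Finsupp.sum_mapDomain_index (fun b => mul_zero b) (fun b m1 m2 => mul_add b m1 m2),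
    Finsupp.mul_sum]
  exact Finsupp.sum_congr fun a _ => by ring

lemma szP_mapDomain (j : ℕ) (m : ℕ →₀ ℕ) :
    szP (Finsupp.mapDomain (fun i => j * i) m) = szP m := by
  unfold szP
  exact Finsupp.sum_mapDomain_index (fun _ => rfl) (fun _ _ _ => rfl)

lemma coeff_MvPSmk (g : (ℕ →₀ ℕ) → R) (m : ℕ →₀ ℕ) :
    MvPowerSeries.coeff m (MvPS.mk g) = g m := rfl

lemma coeff_omegaPS (g : MvPowerSeries ℕ R) (m : ℕ →₀ ℕ) :
    MvPowerSeries.coeff m (omegaPS g) =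
      (-1 : R) ^ (wtP m + szP m) * MvPowerSeries.coeff m g := rfl

lemma coeff_ExpP (g : MvPowerSeries ℕ R) (m : ℕ →₀ ℕ) :
    MvPowerSeries.coeff m (ExpP L g) =
      ∑ᶠ k : ℕ, MvPowerSeries.coeff m (hPlethP L k g) := rfl

lemma coeff_pAdams_omega (f : MvPowerSeries ℕ R) (heven : EvenPS f)
    (j : ℕ) (hj : j ≠ 0) (m : ℕ →₀ ℕ) :
    MvPowerSeries.coeff m (pAdamsPS L j (omegaPS f)) =
      (-1 : R) ^ (wtP m + szP m) * MvPowerSeries.coeff m (pAdamsPS L j f) := by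
  rw [pAdamsPS, pAdamsPS, coeff_MvPSmk, coeff_MvPSmk]
  by_cases h : ∃ m' : ℕ →₀ ℕ, Finsupp.mapDomain (fun i => j * i) m' = m
  · rw [dif_pos h, dif_pos h]
    have hspec : Finsupp.mapDomain (fun i => j * i) (Classical.choose h) = m :=
      Classical.choose_spec h
    set m' := Classical.choose h with hm'
    rw [coeff_omegaPS]
    by_cases hz : MvPowerSeries.coeff m' f = 0
    · rw [hz, mul_zero]
      obtain ⟨k, rfl⟩ := Nat.exists_eq_succ_of_ne_zero hj
      rw [adamsR_zero_right, mul_zero]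
    · have hev : Even (wtP m') := heven m' hz
      have hwt : wtP m = j * wtP m' := by rw [← hspec, wtP_mapDomain]
      have hsz : szP m = szP m' := by rw [← hspec, szP_mapDomain]
      have hsgn : ((-1 : R)) ^ (wtP m + szP m) = (-1) ^ (wtP m' + szP m') := by
        rw [hwt, hsz, pow_add, pow_add, (hev.mul_left j).neg_one_pow, hev.neg_one_pow]
      rw [adamsR_sign L j hj, hsgn]
  · rw [dif_neg h, dif_neg h, mul_zero]

lemma coeff_prod_omega (f : MvPowerSeries ℕ R) (heven : EvenPS f) :
    ∀ (μ : Multiset ℕ), (∀ j ∈ μ, j ≠ 0) → ∀ m : ℕ →₀ ℕ,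
      MvPowerSeries.coeff m ((μ.map fun j => pAdamsPS L j (omegaPS f)).prod) =
        (-1 : R) ^ (wtP m + szP m) *
          MvPowerSeries.coeff m ((μ.map fun j => pAdamsPS L j f).prod) := by
  intro μ
  induction μ using Multiset.induction_on with
  | empty =>
      intro _ m
      simp only [Multiset.map_zero, Multiset.prod_zero]
      by_cases hm : m = 0
      · subst hm
        simp [MvPowerSeries.coeff_one, wtP_zero, szP_zero]
      · simp [MvPowerSeries.coeff_one, hm]
  | cons j μ ih =>
      intro hpos m
      have hj : j ≠ 0 := hpos j (Multiset.mem_cons_self j μ)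
      have hμ : ∀ i ∈ μ, i ≠ 0 := fun i hi => hpos i (Multiset.mem_cons_of_mem hi)
      simp only [Multiset.map_cons, Multiset.prod_cons]
      rw [MvPowerSeries.coeff_mul, MvPowerSeries.coeff_mul, Finset.mul_sum]
      apply Finset.sum_congr rfl
      intro p hp
      have hpm : p.1 + p.2 = m := Finset.HasAntidiagonal.mem_antidiagonal.mp hp
      rw [coeff_pAdams_omega L f heven j hj, ih hμ p.2, ← hpm, wtP_add, szP_add]
      ring

lemma coeff_hPleth_omega (f : MvPowerSeries ℕ R) (heven : EvenPS f) (k : ℕ) (m : ℕ →₀ ℕ) :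
    MvPowerSeries.coeff m (hPlethP L k (omegaPS f)) =
      (-1 : R) ^ (wtP m + szP m) * MvPowerSeries.coeff m (hPlethP L k f) := by
  rw [hPlethP, hPlethP, coeff_MvPSmk, coeff_MvPSmk, Finset.mul_sum]
  apply Finset.sum_congr rfl
  intro lam _
  rw [coeff_prod_omega L f heven lam.parts (fun j hj => (lam.parts_pos hj).ne') m,
    mul_smul_comm]

/-- Let `ω` be the standard involution of the ring of
symmetric functions (`ω(eᵢ) = hᵢ`, `ω(pᵢ) = (-1)^{i-1}pᵢ`), extended to
symmetric power series over a torsion-free pre-λ ring `R`.  If `f` is an even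
symmetric power series with zero constant term, then
`Exp_σ(ω(f)) = ω(Exp_σ(f))`. -/
theorem expSigma_omega_even
    (htf : ∀ (n : ℤ) (r : R), n ≠ 0 → n • r = 0 → r = 0)
    (f : MvPowerSeries ℕ R)
    (hf0 : MvPowerSeries.coeff 0 f = 0)
    (hsupp : ∀ m : ℕ →₀ ℕ, m 0 ≠ 0 → MvPowerSeries.coeff m f = 0)
    (heven : EvenPS f) :
    ExpP L (omegaPS f) = omegaPS (ExpP L f) := by
  apply MvPowerSeries.ext
  intro m
  rw [coeff_ExpP, coeff_omegaPS, coeff_ExpP]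
  rw [finsum_congr fun k => coeff_hPleth_omega L f heven k m]
  rcases Nat.even_or_odd (wtP m + szP m) with h | h
  · simp only [h.neg_one_pow, one_mul]
  · simp only [h.neg_one_pow, neg_one_mul]
    exact finsum_neg_distrib _

end
end

section
/- Let V = ℂ^n with the permutation representation of the symmetric group Σ_n. Then dim (Sym^{k_1} V ⊗ ... ⊗ Sym^{k_ℓ} V)^{Σ_n} equals the number of ways to write the vector (k_1,...,k_ℓ) as ∑_{v ∈ ℤ_{≥0}^ℓ} a_v · v with nonnegative integer multiplicities a_v satisfying ∑_v a_v = n. -/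
open MvPolynomial

/-- `Sym^{k₁}V ⊗ ⋯ ⊗ Sym^{k_ℓ}V` for `V = ℂ^n`, realized as the space of
polynomials in variables `x_{j,t}` (`j ∈ Fin n`, `t ∈ Fin ℓ`) that are
multihomogeneous of multidegree `k = (k₁, …, k_ℓ)`. -/
noncomputable def symTensor (n ℓ : ℕ) (k : Fin ℓ → ℕ) :
    Submodule ℂ (MvPolynomial (Fin n × Fin ℓ) ℂ) :=
  weightedHomogeneousSubmodule ℂ (fun p => Pi.single p.2 1) k

/-- The subspace of `Σ_n`-invariants, where `Σ_n` permutes the first index of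
the variables (i.e. acts on `V = ℂ^n` by the permutation representation and
diagonally on the tensor product). -/
noncomputable def permInvariants (n ℓ : ℕ) :
    Submodule ℂ (MvPolynomial (Fin n × Fin ℓ) ℂ) :=
  ⨅ π : Equiv.Perm (Fin n),
    LinearMap.eqLocus
      (rename (fun p : Fin n × Fin ℓ => (π p.1, p.2))).toLinearMap
      LinearMap.id

namespace DimInvAux

variable {n ℓ : ℕ}

/-- The equivalence of variables induced by a permutation. -/
def eP (π : Equiv.Perm (Fin n)) : (Fin n × Fin ℓ) ≃ (Fin n × Fin ℓ) :=
  π.prodCongr (Equiv.refl _)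

/-- Action of a permutation on exponent vectors. -/
noncomputable def permD (π : Equiv.Perm (Fin n)) (d : (Fin n × Fin ℓ) →₀ ℕ) :
    (Fin n × Fin ℓ) →₀ ℕ :=
  Finsupp.mapDomain (eP π) d

lemma permD_apply (π : Equiv.Perm (Fin n)) (d : (Fin n × Fin ℓ) →₀ ℕ) (i : Fin n) (t : Fin ℓ) :
    permD π d (i, t) = d (π⁻¹ i, t) := by
  rw [permD, Finsupp.mapDomain_equiv_apply]
  rfl

lemma permD_one (d : (Fin n × Fin ℓ) →₀ ℕ) : permD 1 d = d := by
  ext ⟨i, t⟩; rw [permD_apply]; rfl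

lemma permD_mul (π π' : Equiv.Perm (Fin n)) (d : (Fin n × Fin ℓ) →₀ ℕ) :
    permD (π * π') d = permD π (permD π' d) := by
  ext ⟨i, t⟩; rw [permD_apply, permD_apply, permD_apply]; rfl

/-- The `i`-th row of an exponent matrix. -/
def row (d : (Fin n × Fin ℓ) →₀ ℕ) (i : Fin n) : Fin ℓ → ℕ := fun t => d (i, t)

lemma row_permD (π : Equiv.Perm (Fin n)) (d : (Fin n × Fin ℓ) →₀ ℕ) (i : Fin n) :
    row (permD π d) i = row d (π⁻¹ i) := by
  funext t; exact permD_apply π d i t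

/-- The multiset of rows, as a finsupp. -/
noncomputable def mult (d : (Fin n × Fin ℓ) →₀ ℕ) : (Fin ℓ → ℕ) →₀ ℕ :=
  (Multiset.map (row d) Finset.univ.val).toFinsupp

lemma mult_permD (π : Equiv.Perm (Fin n)) (d : (Fin n × Fin ℓ) →₀ ℕ) :
    mult (permD π d) = mult d := by
  classical
  unfold mult
  congr 1
  have : Multiset.map (row (permD π d)) Finset.univ.val
      = Multiset.map (row d) (Multiset.map (π⁻¹ : Equiv.Perm (Fin n)) Finset.univ.val) := by
    rw [Multiset.map_map]
    exact Multiset.map_congr rfl fun i _ => row_permD π d i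
  rw [this]
  congr 1
  exact Multiset.map_univ_val_equiv (π⁻¹ : Equiv.Perm (Fin n))

lemma sum_toFinsupp_smul (s : Multiset (Fin ℓ → ℕ)) :
    (s.toFinsupp.sum fun v c => c • v) = s.sum := by
  classical
  induction s using Multiset.induction with
  | empty => simp
  | cons a s ih =>
      rw [show a ::ₘ s = {a} + s from rfl, Multiset.toFinsupp_add, Multiset.sum_add,
        Finsupp.sum_add_index' (fun v => zero_smul ℕ v) (fun v c c' => add_smul c c' v), ih,
        Multiset.toFinsupp_singleton, Finsupp.sum_single_index (zero_smul ℕ a), one_smul,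
        Multiset.sum_singleton]

lemma mult_sum_count (d : (Fin n × Fin ℓ) →₀ ℕ) :
    ((mult d).sum fun _ c => c) = n := by
  classical
  have : ((mult d).sum fun _ c => c) = Multiset.card (Finsupp.toMultiset (mult d)) := by
    rw [Finsupp.card_toMultiset]; rfl
  rw [this, mult, Multiset.toFinsupp_toMultiset, Multiset.card_map]
  simp

lemma mult_sum_smul (d : (Fin n × Fin ℓ) →₀ ℕ) :
    ((mult d).sum fun v c => c • v) = ∑ i : Fin n, row d i := by
  classical
  rw [mult, sum_toFinsupp_smul]
  rfl

lemma weight_eq (d : (Fin n × Fin ℓ) →₀ ℕ) :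
    Finsupp.weight (fun p : Fin n × Fin ℓ => (Pi.single p.2 1 : Fin ℓ → ℕ)) d
      = ∑ i : Fin n, row d i := by
  classical
  rw [Finsupp.weight_apply, Finsupp.sum]
  rw [Finset.sum_subset (Finset.subset_univ d.support)
    (fun p _ hp => by
      rw [Finsupp.notMem_support_iff] at hp
      rw [hp, zero_smul])]
  rw [Fintype.sum_prod_type]
  refine Finset.sum_congr rfl fun i _ => ?_
  funext t'
  simp [Finset.sum_apply, Pi.single_apply, row]

lemma mult_apply (d : (Fin n × Fin ℓ) →₀ ℕ) (v : Fin ℓ → ℕ) :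
    mult d v = Fintype.card {i : Fin n // row d i = v} := by
  classical
  have : mult d v = Multiset.count v (Multiset.map (row d) Finset.univ.val) := rfl
  rw [this, Multiset.count_map, Fintype.card_subtype, Finset.card, Finset.filter_val]
  congr 1
  exact Multiset.filter_congr (fun x _ => by rw [eq_comm])

lemma exists_rep (a : (Fin ℓ → ℕ) →₀ ℕ) (ha : (a.sum fun _ c => c) = n) :
    ∃ d : (Fin n × Fin ℓ) →₀ ℕ, mult d = a := by
  classical
  have hcard : Multiset.card a.toMultiset = n := by
    rw [Finsupp.card_toMultiset]; exact ha
  have hlen : a.toMultiset.toList.length = n := by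
    rw [Multiset.length_toList, hcard]
  set l := a.toMultiset.toList with hl
  refine ⟨Finsupp.equivFunOnFinite.symm (fun p => l.get (Fin.cast hlen.symm p.1) p.2), ?_⟩
  have key : Multiset.map (row (Finsupp.equivFunOnFinite.symm
        (fun p : Fin n × Fin ℓ => l.get (Fin.cast hlen.symm p.1) p.2))) Finset.univ.val
      = (l : Multiset (Fin ℓ → ℕ)) := by
    have hrow : (row (Finsupp.equivFunOnFinite.symm
        (fun p : Fin n × Fin ℓ => l.get (Fin.cast hlen.symm p.1) p.2)))
        = fun i => l.get (Fin.cast hlen.symm i) := by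
      funext i t; rfl
    rw [hrow, Fin.univ_val_map]
    rw [show ((List.ofFn fun i : Fin n => l.get (Fin.cast hlen.symm i)) : Multiset (Fin ℓ → ℕ))
        = ((List.ofFn l.get : List (Fin ℓ → ℕ)) : Multiset (Fin ℓ → ℕ)) from ?_]
    · rw [List.ofFn_get]
    · congr 1
      subst hlen
      rfl
  rw [mult, key, hl, Multiset.coe_toList, Finsupp.toMultiset_toFinsupp]

lemma exists_perm_of_mult_eq {d d' : (Fin n × Fin ℓ) →₀ ℕ} (h : mult d = mult d') :
    ∃ π : Equiv.Perm (Fin n), d' = permD π d := by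
  classical
  have hcard : ∀ v, Fintype.card {i : Fin n // row d' i = v}
      = Fintype.card {i : Fin n // row d i = v} := by
    intro v
    rw [← mult_apply, ← mult_apply, h]
  have hne : ∀ v, Nonempty ({i : Fin n // row d' i = v} ≃ {i : Fin n // row d i = v}) :=
    fun v => Fintype.card_eq.mp (hcard v)
  let σ : Fin n ≃ Fin n := Equiv.ofFiberEquiv (f := row d') (g := row d)
    (fun v => (hne v).some)
  have hσ : ∀ i, row d (σ i) = row d' i := fun i => Equiv.ofFiberEquiv_map _ i
  refine ⟨(σ : Equiv.Perm (Fin n))⁻¹, ?_⟩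
  ext ⟨i, t⟩
  rw [permD_apply, inv_inv]
  exact (congrFun (hσ i) t).symm

lemma finite_vecs_le (k : Fin ℓ → ℕ) : Finite {v : Fin ℓ → ℕ // ∀ t, v t ≤ k t} := by
  refine Finite.of_injective (fun v => (fun t => (⟨v.1 t, Nat.lt_succ_of_le (v.2 t)⟩ : Fin (k t + 1)) : ∀ t, Fin (k t + 1))) ?_
  intro v v' h
  ext t
  exact congrArg Fin.val (congrFun h t)

variable {k : Fin ℓ → ℕ}

lemma apply_le_n {a : (Fin ℓ → ℕ) →₀ ℕ} (ha : (a.sum fun _ c => c) = n) (v : Fin ℓ → ℕ) :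
    a v ≤ n := by
  classical
  by_cases hv : v ∈ a.support
  · rw [← ha, Finsupp.sum]
    exact Finset.single_le_sum (f := fun u => a u) (fun _ _ => Nat.zero_le _) hv
  · rw [Finsupp.notMem_support_iff.mp hv]; exact Nat.zero_le _

lemma apply_eq_zero_of_not_le {a : (Fin ℓ → ℕ) →₀ ℕ}
    (ha : (a.sum fun v c => c • v) = k) {v : Fin ℓ → ℕ} (hv : ¬ ∀ t, v t ≤ k t) :
    a v = 0 := by
  classical
  by_contra h0
  apply hv
  intro t
  have hvs : v ∈ a.support := Finsupp.mem_support_iff.mpr h0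
  have hk : ∑ u ∈ a.support, a u * u t = k t := by
    have := congrFun ha t
    rw [Finsupp.sum] at this
    rw [← this, Finset.sum_apply]
    rfl
  have h1 : a v * v t ≤ k t := by
    rw [← hk]
    exact Finset.single_le_sum (f := fun u => a u * u t) (fun _ _ => Nat.zero_le _) hvs
  calc v t ≤ a v * v t := Nat.le_mul_of_pos_left _ (Nat.pos_of_ne_zero h0)
    _ ≤ k t := h1

lemma finite_index (n ℓ : ℕ) (k : Fin ℓ → ℕ) :
    Finite {a : (Fin ℓ → ℕ) →₀ ℕ //
      (a.sum fun _ c => c) = n ∧ (a.sum fun v c => c • v) = k} := by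
  classical
  haveI := finite_vecs_le k
  refine Finite.of_injective (fun a => (fun v => (⟨a.1 v.1, Nat.lt_succ_of_le (apply_le_n a.2.1 v.1)⟩ : Fin (n+1)) : {v : Fin ℓ → ℕ // ∀ t, v t ≤ k t} → Fin (n+1))) ?_
  intro a a' h
  ext v
  by_cases hv : ∀ t, v t ≤ k t
  · exact congrArg Fin.val (congrFun h ⟨v, hv⟩)
  · rw [apply_eq_zero_of_not_le a.2.2 hv, apply_eq_zero_of_not_le a'.2.2 hv]

lemma eP_coe (π : Equiv.Perm (Fin n)) :
    (⇑(eP π) : Fin n × Fin ℓ → Fin n × Fin ℓ) = fun p => (π p.1, p.2) := rfl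

lemma mem_permInvariants {p : MvPolynomial (Fin n × Fin ℓ) ℂ} :
    p ∈ permInvariants n ℓ ↔ ∀ π : Equiv.Perm (Fin n), rename (⇑(eP π)) p = p := by
  rw [permInvariants, Submodule.mem_iInf]
  refine forall_congr' fun π => ?_
  rw [LinearMap.mem_eqLocus]
  constructor <;> exact fun h => h

lemma coeff_permD_eq {p : MvPolynomial (Fin n × Fin ℓ) ℂ} (hp : p ∈ permInvariants n ℓ)
    (π : Equiv.Perm (Fin n)) (d : (Fin n × Fin ℓ) →₀ ℕ) :
    coeff (permD π d) p = coeff d p := by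
  conv_lhs => rw [← (mem_permInvariants.mp hp π)]
  exact coeff_rename_mapDomain _ (eP π).injective p d

lemma mem_symTensor_iff {p : MvPolynomial (Fin n × Fin ℓ) ℂ} :
    p ∈ symTensor n ℓ k ↔ ∀ d, coeff d p ≠ 0 → ∑ i : Fin n, row d i = k := by
  rw [symTensor, mem_weightedHomogeneousSubmodule]
  unfold MvPolynomial.IsWeightedHomogeneous
  refine forall_congr' fun d => forall_congr' fun _ => ?_
  rw [weight_eq]

/-- A chosen exponent matrix whose rows realize the multiset `a`. -/
noncomputable def rep (a : (Fin ℓ → ℕ) →₀ ℕ) (ha : (a.sum fun _ c => c) = n) :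
    (Fin n × Fin ℓ) →₀ ℕ :=
  (exists_rep a ha).choose

lemma mult_rep (a : (Fin ℓ → ℕ) →₀ ℕ) (ha : (a.sum fun _ c => c) = n) :
    mult (rep a ha) = a :=
  (exists_rep a ha).choose_spec

/-- The (scaled) orbit sum of the monomial with exponent `rep a`. -/
noncomputable def orbSum (a : (Fin ℓ → ℕ) →₀ ℕ) (ha : (a.sum fun _ c => c) = n) :
    MvPolynomial (Fin n × Fin ℓ) ℂ :=
  ∑ π : Equiv.Perm (Fin n), monomial (permD π (rep a ha)) (1 : ℂ)

lemma coeff_orbSum (a : (Fin ℓ → ℕ) →₀ ℕ) (ha : (a.sum fun _ c => c) = n)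
    (d : (Fin n × Fin ℓ) →₀ ℕ) :
    coeff d (orbSum a ha)
      = ((Finset.univ.filter fun π : Equiv.Perm (Fin n) => permD π (rep a ha) = d).card : ℂ) := by
  classical
  rw [orbSum]
  rw [MvPolynomial.coeff_sum]
  rw [Finset.card_filter, Nat.cast_sum]
  refine Finset.sum_congr rfl fun π _ => ?_
  rw [coeff_monomial]
  by_cases h : permD π (rep a ha) = d <;> simp [h]

lemma coeff_orbSum_self (a : (Fin ℓ → ℕ) →₀ ℕ) (ha : (a.sum fun _ c => c) = n) :
    coeff (rep a ha) (orbSum a ha) ≠ 0 := by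
  classical
  rw [coeff_orbSum]
  have : (1 : Equiv.Perm (Fin n)) ∈
      Finset.univ.filter fun π : Equiv.Perm (Fin n) => permD π (rep a ha) = rep a ha := by
    simp [permD_one]
  have hpos : 0 < (Finset.univ.filter fun π : Equiv.Perm (Fin n) =>
      permD π (rep a ha) = rep a ha).card := Finset.card_pos.mpr ⟨_, this⟩
  exact_mod_cast hpos.ne'

lemma coeff_orbSum_other {a a' : (Fin ℓ → ℕ) →₀ ℕ} (ha : (a.sum fun _ c => c) = n)
    (ha' : (a'.sum fun _ c => c) = n) (hne : a ≠ a') :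
    coeff (rep a' ha') (orbSum a ha) = 0 := by
  classical
  rw [coeff_orbSum]
  have : (Finset.univ.filter fun π : Equiv.Perm (Fin n) => permD π (rep a ha) = rep a' ha') = ∅ := by
    refine Finset.filter_false_of_mem fun π _ h => ?_
    apply hne
    rw [← mult_rep a ha, ← mult_rep a' ha', ← h, mult_permD]
  rw [this]
  simp

lemma orbSum_mem_symTensor (a : (Fin ℓ → ℕ) →₀ ℕ) (ha : (a.sum fun _ c => c) = n)
    (hk : (a.sum fun v c => c • v) = k) : orbSum a ha ∈ symTensor n ℓ k := by
  classical
  rw [orbSum]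
  refine Submodule.sum_mem _ fun π _ => ?_
  rw [symTensor, mem_weightedHomogeneousSubmodule]
  refine isWeightedHomogeneous_monomial _ _ _ ?_
  rw [weight_eq, ← mult_sum_smul, mult_permD, mult_rep, hk]

lemma orbSum_mem_permInvariants (a : (Fin ℓ → ℕ) →₀ ℕ) (ha : (a.sum fun _ c => c) = n) :
    orbSum a ha ∈ permInvariants n ℓ := by
  classical
  rw [mem_permInvariants]
  intro π'
  rw [orbSum, map_sum]
  have : ∀ π : Equiv.Perm (Fin n),
      rename (⇑(eP π')) (monomial (permD π (rep a ha)) (1 : ℂ))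
        = monomial (permD (π' * π) (rep a ha)) (1 : ℂ) := by
    intro π
    rw [rename_monomial, permD_mul]
    rfl
  rw [Finset.sum_congr rfl fun π _ => this π]
  exact Equiv.sum_comp (Equiv.mulLeft π') (fun π => monomial (permD π (rep a ha)) (1 : ℂ))

end DimInvAux

/-- Let `V = ℂ^n` with the permutation representation of the
symmetric group `Σ_n`.  Then `dim (Sym^{k₁}V ⊗ ⋯ ⊗ Sym^{k_ℓ}V)^{Σ_n}` equals
the number of ways to write the vector `(k₁, …, k_ℓ)` as
`∑_{v ∈ ℤ_{≥0}^ℓ} a_v·v` with nonnegative integer multiplicities `a_v`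
satisfying `∑_v a_v = n`. -/
theorem dim_invariants_sym_tensor (n ℓ : ℕ) (k : Fin ℓ → ℕ) :
    Module.finrank ℂ ↥(symTensor n ℓ k ⊓ permInvariants n ℓ) =
      Nat.card {a : (Fin ℓ → ℕ) →₀ ℕ //
        (a.sum fun _ c => c) = n ∧ (a.sum fun v c => c • v) = k} := by
  classical
  open DimInvAux in
  haveI : Finite {a : (Fin ℓ → ℕ) →₀ ℕ //
      (a.sum fun _ c => c) = n ∧ (a.sum fun v c => c • v) = k} :=
    DimInvAux.finite_index n ℓ k
  letI : Fintype {a : (Fin ℓ → ℕ) →₀ ℕ //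
      (a.sum fun _ c => c) = n ∧ (a.sum fun v c => c • v) = k} := Fintype.ofFinite _
  set I := {a : (Fin ℓ → ℕ) →₀ ℕ //
      (a.sum fun _ c => c) = n ∧ (a.sum fun v c => c • v) = k} with hI
  let φ : ↥(symTensor n ℓ k ⊓ permInvariants n ℓ) →ₗ[ℂ] (I → ℂ) :=
    { toFun := fun p a => MvPolynomial.coeff (DimInvAux.rep a.1 a.2.1)
        (p : MvPolynomial (Fin n × Fin ℓ) ℂ)
      map_add' := fun p q => by funext a; simp [MvPolynomial.coeff_add]
      map_smul' := fun c p => by funext a; simp }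
  have key : ∀ p : ↥(symTensor n ℓ k ⊓ permInvariants n ℓ),
      (∀ a : I, MvPolynomial.coeff (DimInvAux.rep a.1 a.2.1)
        (p : MvPolynomial (Fin n × Fin ℓ) ℂ) = 0) →
      (p : MvPolynomial (Fin n × Fin ℓ) ℂ) = 0 := by
    intro p hp0
    obtain ⟨hsym, hinv⟩ := Submodule.mem_inf.mp p.2
    ext d
    rw [coeff_zero]
    by_contra hd
    have hk : ∑ i : Fin n, DimInvAux.row d i = k := DimInvAux.mem_symTensor_iff.mp hsym d hd
    let a : I := ⟨DimInvAux.mult d, DimInvAux.mult_sum_count d,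
      by rw [DimInvAux.mult_sum_smul]; exact hk⟩
    have hmm : DimInvAux.mult (DimInvAux.rep a.1 a.2.1) = DimInvAux.mult d :=
      DimInvAux.mult_rep a.1 a.2.1
    obtain ⟨π, hπ⟩ := DimInvAux.exists_perm_of_mult_eq hmm
    apply hd
    rw [hπ, DimInvAux.coeff_permD_eq hinv]
    exact hp0 a
  have hinj : Function.Injective φ := by
    intro p q h
    have h0 : φ (p - q) = 0 := by rw [map_sub, h, sub_self]
    have := key (p - q) (fun a => congrFun h0 a)
    rw [Submodule.coe_sub, sub_eq_zero] at this
    exact Subtype.ext this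
  have hsurj : Function.Surjective φ := by
    intro c
    set s : I → ℂ := fun a =>
      MvPolynomial.coeff (DimInvAux.rep a.1 a.2.1) (DimInvAux.orbSum a.1 a.2.1) with hs
    have hs0 : ∀ a : I, s a ≠ 0 := fun a => DimInvAux.coeff_orbSum_self a.1 a.2.1
    refine ⟨⟨∑ a : I, (c a / s a) • DimInvAux.orbSum a.1 a.2.1, ?_⟩, ?_⟩
    · refine Submodule.mem_inf.mpr ⟨?_, ?_⟩
      · exact Submodule.sum_mem _ fun a _ => Submodule.smul_mem _ _
          (DimInvAux.orbSum_mem_symTensor a.1 a.2.1 a.2.2)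
      · exact Submodule.sum_mem _ fun a _ => Submodule.smul_mem _ _
          (DimInvAux.orbSum_mem_permInvariants a.1 a.2.1)
    · funext a'
      show MvPolynomial.coeff (DimInvAux.rep a'.1 a'.2.1)
        (∑ a : I, (c a / s a) • DimInvAux.orbSum a.1 a.2.1) = c a'
      rw [MvPolynomial.coeff_sum]
      rw [Finset.sum_eq_single a']
      · rw [MvPolynomial.coeff_smul]
        show (c a' / s a') • s a' = c a'
        rw [smul_eq_mul, div_mul_cancel₀ _ (hs0 a')]
      · intro b _ hb
        rw [MvPolynomial.coeff_smul,
          DimInvAux.coeff_orbSum_other b.2.1 a'.2.1 (fun h => hb (Subtype.ext h)),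
          smul_zero]
      · intro h
        exact absurd (Finset.mem_univ a') h
  have e := LinearEquiv.ofBijective φ ⟨hinj, hsurj⟩
  rw [e.finrank_eq, Module.finrank_fintype_fun_eq_card, Nat.card_eq_fintype_card]
end
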